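/- Let A be a commutative unital complex Banach algebra, let α be a monic polynomial over A of degree n ≥ 1, and let A_α = A[x]/(α(x)). Suppose that A_α has dense invertible group, in the following sense: for every polynomial β ∈ A[x] of degree less than n and every ε > 0 there exists a polynomial β̃ ∈ A[x] of degree less than n, whose coefficients each differ in norm from the corresponding coefficients of β by less than ε, such that the image of β̃ in A_α is invertible in A_α. Then every n-th power aⁿ (a ∈ A) lies in the closure of the set of invertible elements of A; that is, { aⁿ : a ∈ A } ⊆ cl G(A). -/

import Mathlib

open Polynomial Filter Finset Topology

/-- **Proposition 2.4.** Let `A` be a commutative unital complex Banach algebra and `α` a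
monic polynomial over `A` of degree `n ≥ 1`.  If the Arens–Hoffman extension
`A_α = A[x]/(α)` has dense invertible group (expressed via coefficientwise approximation of
representatives of degree less than `n`), then every `n`-th power in `A` lies in the closure
of the invertible group of `A`. -/
theorem nth_powers_mem_closure_invertibles_of_arensHoffman_dense
    (A : Type*) [NormedCommRing A] [NormedAlgebra ℂ A] [CompleteSpace A]
    (α : Polynomial A) (hmonic : α.Monic) (hdeg : 1 ≤ α.natDegree)
    (h : ∀ β : Polynomial A, β.degree < (α.natDegree : WithBot ℕ) → ∀ ε : ℝ, 0 < ε →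
      ∃ γ : Polynomial A, γ.degree < (α.natDegree : WithBot ℕ) ∧
        (∀ j, ‖γ.coeff j - β.coeff j‖ < ε) ∧ IsUnit (AdjoinRoot.mk α γ)) :
    ∀ a : A, a ^ α.natDegree ∈ closure {x : A | IsUnit x} := by
  intro a
  rcases subsingleton_or_nontrivial A with hA | hA
  · refine subset_closure ?_
    have : a ^ α.natDegree = 1 := Subsingleton.elim _ _
    rw [Set.mem_setOf_eq, this]
    exact isUnit_one
  set n := α.natDegree with hn
  have hn0 : (0 : WithBot ℕ) < (n : WithBot ℕ) := by
    exact_mod_cast Nat.lt_of_lt_of_le Nat.zero_lt_one hdeg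
  have hCa : (C a).degree < (n : WithBot ℕ) := lt_of_le_of_lt degree_C_le hn0
  have hseq : ∀ k : ℕ, ∃ γ : Polynomial A, γ.degree < (n : WithBot ℕ) ∧
      (∀ j, ‖γ.coeff j - (C a).coeff j‖ < 1 / (k + 1)) ∧ IsUnit (AdjoinRoot.mk α γ) :=
    fun k => h _ hCa _ (by positivity)
  choose γ hγdeg hγc hγu using hseq
  -- the power basis of the Arens–Hoffman extension
  set b := AdjoinRoot.powerBasisAux' hmonic with hb
  haveI := Module.Free.of_basis b
  haveI := Module.Finite.of_basis b
  -- the multiplication matrices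
  set M : ℕ → Matrix (Fin n) (Fin n) A :=
    fun k i j => ((γ k * X ^ (j : ℕ)) %ₘ α).coeff i with hM
  have hnorm : ∀ k, Algebra.norm A (AdjoinRoot.mk α (γ k)) = (M k).det := by
    intro k
    rw [Algebra.norm_eq_matrix_det b]
    congr 1
    ext i j
    rw [Algebra.leftMulMatrix_eq_repr_mul]
    have hbj : b j = AdjoinRoot.mk α (X ^ (j : ℕ)) := by
      have := (AdjoinRoot.powerBasis' hmonic).basis_eq_pow j
      simp only [AdjoinRoot.powerBasis'] at this
      rw [hb]; refine this.trans ?_; rw [← AdjoinRoot.mk_X, ← map_pow]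
    rw [hbj, ← map_mul, AdjoinRoot.powerBasisAux'_repr_apply_to_fun,
      AdjoinRoot.modByMonicHom_mk]
  -- the perturbations
  set δ : ℕ → Polynomial A := fun k => γ k - C a with hδ
  have hδdeg : ∀ k, (δ k).natDegree < n := by
    intro k
    by_cases h0 : δ k = 0
    · simpa [h0] using Nat.lt_of_lt_of_le Nat.zero_lt_one hdeg
    · rw [natDegree_lt_iff_degree_lt h0]
      exact lt_of_le_of_lt (degree_sub_le _ _) (max_lt (hγdeg k) hCa)
  -- entrywise decomposition of the matrices
  have hMk : ∀ k i j, M k i j = (a • (1 : Matrix (Fin n) (Fin n) A)) i j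
      + ∑ m ∈ Finset.range n, (δ k).coeff m * ((X ^ (m + (j : ℕ)) %ₘ α).coeff i) := by
    intro k i j
    have hγeq : γ k = C a + δ k := by rw [hδ]; ring
    have hd : (δ k) * X ^ (j : ℕ)
        = ∑ m ∈ Finset.range n, (δ k).coeff m • X ^ (m + (j : ℕ)) := by
      conv_lhs => rw [(δ k).as_sum_range' n (hδdeg k)]
      rw [Finset.sum_mul]
      refine Finset.sum_congr rfl fun m _ => ?_
      rw [← C_mul_X_pow_eq_monomial, smul_eq_C_mul, mul_assoc, ← pow_add]
    have hCaX : (C a * X ^ (j : ℕ)) %ₘ α = C a * X ^ (j : ℕ) := by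
      rw [modByMonic_eq_self_iff hmonic]
      refine lt_of_le_of_lt (degree_C_mul_X_pow_le _ _) ?_
      rw [degree_eq_natDegree hmonic.ne_zero]
      exact_mod_cast j.isLt
    have hsum : ((δ k) * X ^ (j : ℕ)) %ₘ α
        = ∑ m ∈ Finset.range n, (δ k).coeff m • (X ^ (m + (j : ℕ)) %ₘ α) := by
      rw [hd]
      have hms := map_sum (Polynomial.modByMonicHom α)
        (fun m => (δ k).coeff m • X ^ (m + (j : ℕ))) (Finset.range n)
      simp only [Polynomial.modByMonicHom_apply] at hms
      rw [hms]
      exact Finset.sum_congr rfl fun m _ => smul_modByMonic _ _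
    show ((γ k * X ^ (j : ℕ)) %ₘ α).coeff i = _
    rw [hγeq, add_mul, add_modByMonic, coeff_add, hCaX, hsum, finset_sum_coeff]
    have h1 : (C a * X ^ (j : ℕ)).coeff i = (a • (1 : Matrix (Fin n) (Fin n) A)) i j := by
      simp [Matrix.one_apply, coeff_C_mul, coeff_X_pow, Fin.val_inj, eq_comm]
    have h2 : ∀ m, ((δ k).coeff m • (X ^ (m + (j : ℕ)) %ₘ α)).coeff i
        = (δ k).coeff m * ((X ^ (m + (j : ℕ)) %ₘ α).coeff i) := fun m => by
      rw [coeff_smul, smul_eq_mul]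
    rw [h1]
    exact congrArg (fun z => (a • (1 : Matrix (Fin n) (Fin n) A)) i j + z)
      (Finset.sum_congr rfl fun m _ => h2 m)
  -- convergence of the matrices
  have hM1 : Tendsto M atTop (𝓝 (a • (1 : Matrix (Fin n) (Fin n) A))) := by
    refine tendsto_pi_nhds.2 ?_
    intro i
    rw [tendsto_pi_nhds]
    intro j
    simp only [hMk]
    have h0 : Tendsto (fun k => ∑ m ∈ Finset.range n,
        (δ k).coeff m * ((X ^ (m + (j : ℕ)) %ₘ α).coeff i)) atTop (𝓝 0) := by
      have hz : (0 : A) = ∑ m ∈ Finset.range n, 0 := by simp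
      rw [hz]
      refine tendsto_finset_sum _ fun m _ => ?_
      have hc : Tendsto (fun k => (δ k).coeff m) atTop (𝓝 0) := by
        refine squeeze_zero_norm (fun k => ?_) tendsto_one_div_add_atTop_nhds_zero_nat
        simpa [hδ, coeff_sub] using (hγc k m).le
      simpa using hc.mul_const ((X ^ (m + (j : ℕ)) %ₘ α).coeff i)
    simpa using tendsto_const_nhds.add h0
  have hdet : Tendsto (fun k => (M k).det) atTop (𝓝 (a ^ n)) := by
    have hcont : Continuous fun N : Matrix (Fin n) (Fin n) A => N.det :=
      Continuous.matrix_det continuous_id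
    have := (hcont.tendsto (a • (1 : Matrix (Fin n) (Fin n) A))).comp hM1
    simpa [Function.comp_def, Matrix.det_smul, Matrix.det_one] using this
  refine mem_closure_of_tendsto hdet (Eventually.of_forall fun k => ?_)
  show IsUnit ((M k).det)
  rw [← hnorm k]
  exact (hγu k).map (Algebra.norm A)
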